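/- Uniform boundedness and uniform ultimate boundedness of the time-varying network (Proposition 4). Let θ : ℝ → ℝⁿ, k : ℝ → ℝⁿ, V^* : ℝ → ℝⁿ be continuously differentiable with bounded derivatives, and suppose there exist constants c_k > 0, c_r > 0, k_min > 0 such that for all t ∈ ℝ and all i: k_min ≤ k_i(t) ≤ c_k and |k_i(t) V_i^*(t)| ≤ c_r. Consider solutions of the system τ_i V̇_i(t) = V_i(t) [ (Ψ(θ(t)) V(t))_i + k_i(t) V_i^*(t) ] with initial condition V(t₀) ∈ ℝⁿ₊. Then: (a) uniform boundedness: for every R₁ > 0 there exists R₂(R₁) > 0 such that for every t₀ ∈ ℝ and every such solution with ‖V(t₀)‖ ≤ R₁, one has ‖V(t)‖ ≤ R₂(R₁) for all t ≥ t₀; and (b) uniform ultimate boundedness: there exists R > 0 such that for every R₁ > 0 there exists T(R₁) > 0 such that for every t₀ ∈ ℝ and every such solution with ‖V(t₀)‖ ≤ R₁, one has ‖V(t)‖ ≤ R for all t ≥ t₀ + T(R₁). -/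

import Mathlib

open Finset Matrix

/-- Euclidean norm on `Fin n → ℝ`. -/
noncomputable def euclNorm {n : ℕ} (x : Fin n → ℝ) : ℝ :=
  Real.sqrt (∑ i, x i ^ 2)

/-- A solution of the time-varying quadratic-droop network
`τᵢ V̇ᵢ = Vᵢ ((Ψ(t) V)ᵢ + kᵢ(t) Vᵢ*(t))` starting in the nonnegative orthant
at time `t₀`. -/
def IsNetSolution {n : ℕ} (τ : Fin n → ℝ) (Ψ : ℝ → Matrix (Fin n) (Fin n) ℝ)
    (kf Vstf : ℝ → Fin n → ℝ) (t₀ : ℝ) (V : ℝ → Fin n → ℝ) : Prop :=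
  (∀ i, 0 ≤ V t₀ i) ∧
  ∀ i, ∀ t ∈ Set.Ici t₀,
    HasDerivAt (fun s => V s i)
      (V t i * ((Ψ t).mulVec (V t) i + kf t i * Vstf t i) / τ i) t

/-- Nonnegativity propagation for `g' = g·h`. -/
lemma my_aux_nonneg {g h : ℝ → ℝ} {a : ℝ}
    (hg : ∀ t ∈ Set.Ici a, HasDerivAt g (g t * h t) t)
    (hh : ContinuousOn h (Set.Ici a)) (h0 : 0 ≤ g a) :
    ∀ t ∈ Set.Ici a, 0 ≤ g t := by
  set h' : ℝ → ℝ := fun t => h (max t a) with hh'def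
  have hcont : Continuous h' :=
    hh.comp_continuous (continuous_id.max continuous_const) fun x => Set.mem_Ici.mpr (le_max_right _ _)
  set H : ℝ → ℝ := fun t => ∫ s in a..t, h' s with hHdef
  have hH : ∀ t, HasDerivAt H (h' t) t := fun t =>
    (hcont.integral_hasStrictDerivAt a t).hasDerivAt
  set u : ℝ → ℝ := fun t => g t * Real.exp (-H t) with hudef
  have hu : ∀ t ∈ Set.Ici a, HasDerivAt u 0 t := by
    intro t ht
    have h1 : HasDerivAt (fun s => Real.exp (-H s)) (Real.exp (-H t) * (-h' t)) t :=
      ((hH t).neg).exp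
    have h2 := (hg t ht).mul h1
    have h3 : h' t = h t := by simp [hh'def, max_eq_left (Set.mem_Ici.mp ht)]
    refine h2.congr_deriv ?_
    rw [h3]; ring
  intro t ht
  have hconst : u t = u a := by
    have := constant_of_has_deriv_right_zero
      (f := u) (a := a) (b := t)
      (fun x hx => (hu x (Set.mem_Ici.mpr hx.1)).continuousAt.continuousWithinAt)
      (fun x hx => (hu x (Set.mem_Ici.mpr hx.1)).hasDerivWithinAt)
    exact this t ⟨Set.mem_Ici.mp ht, le_refl t⟩
  have hua : u a = g a := by
    simp [hudef, hHdef, intervalIntegral.integral_same]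
  have : 0 ≤ u t := by rw [hconst, hua]; exact h0
  have hexp := Real.exp_pos (-H t)
  simp only [hudef] at this
  exact (mul_nonneg_iff_of_pos_right hexp).mp this

/-- Constant barrier. -/
lemma my_aux_le_const {f f' : ℝ → ℝ} {a M : ℝ}
    (hf : ∀ t ∈ Set.Ici a, HasDerivAt f (f' t) t) (hfa : f a ≤ M)
    (hM : ∀ t ∈ Set.Ici a, f t = M → f' t < 0) :
    ∀ t ∈ Set.Ici a, f t ≤ M := by
  intro t ht
  have := image_le_of_deriv_right_lt_deriv_boundary
    (f := f) (f' := f') (a := a) (b := t) (B := fun _ => M) (B' := fun _ => 0)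
    (fun x hx => (hf x (Set.mem_Ici.mpr hx.1)).continuousAt.continuousWithinAt)
    (fun x hx => (hf x (Set.mem_Ici.mpr hx.1)).hasDerivWithinAt)
    hfa (fun x => hasDerivAt_const x M)
    (fun x hx hfx => hM x (Set.mem_Ici.mpr hx.1) hfx)
  exact this ⟨Set.mem_Ici.mp ht, le_refl t⟩

/-- Linear decay barrier. -/
lemma my_aux_decay {f f' : ℝ → ℝ} {a C M δ : ℝ}
    (hf : ∀ t ∈ Set.Ici a, HasDerivAt f (f' t) t)
    (hδ : 0 < δ) (hCM : M ≤ C) (hfa : f a ≤ C)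
    (hdec : ∀ t ∈ Set.Ici a, M ≤ f t → f' t ≤ -δ) :
    f (a + (C - M) / (δ / 2)) ≤ M := by
  have hδ2 : (0:ℝ) < δ / 2 := by linarith
  set b := a + (C - M) / (δ / 2) with hbdef
  have hab : a ≤ b := by
    have h9 : 0 ≤ (C - M) / (δ / 2) := div_nonneg (by linarith) hδ2.le
    rw [hbdef]; linarith
  have key := image_le_of_deriv_right_lt_deriv_boundary
    (f := f) (f' := f') (a := a) (b := b)
    (B := fun x => C - (δ / 2) * (x - a)) (B' := fun _ => -(δ / 2))
    (fun x hx => (hf x (Set.mem_Ici.mpr hx.1)).continuousAt.continuousWithinAt)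
    (fun x hx => (hf x (Set.mem_Ici.mpr hx.1)).hasDerivWithinAt)
    (by simp; linarith)
    (fun x => by
      have h1 : HasDerivAt (fun y : ℝ => y - a) 1 x := (hasDerivAt_id x).sub_const a
      have h2 := (h1.const_mul (δ / 2)).const_sub C
      simpa using h2)
    (fun x hx hfx => by
      have hxa : a ≤ x := hx.1
      have hxb : x < b := hx.2
      have hBx : M < C - (δ / 2) * (x - a) := by
        have : (δ / 2) * (x - a) < (δ / 2) * (b - a) := by
          apply mul_lt_mul_of_pos_left _ hδ2; linarith
        have hba : (δ / 2) * (b - a) = C - M := by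
          rw [hbdef]; field_simp; ring
        linarith
      have hMfx : M ≤ f x := by rw [hfx]; linarith
      have := hdec x (Set.mem_Ici.mpr hxa) hMfx
      linarith)
  have := key ⟨hab, le_refl b⟩
  have hBb : C - (δ / 2) * (b - a) = M := by
    rw [hbdef]; field_simp; ring
  linarith [this, hBb.ge, hBb.le]

lemma my_euclNorm_le_sum {n : ℕ} (x : Fin n → ℝ) (hx : ∀ i, 0 ≤ x i) :
    Real.sqrt (∑ i, x i ^ 2) ≤ ∑ i, x i := by
  have hs : 0 ≤ ∑ i, x i := Finset.sum_nonneg fun i _ => hx i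
  rw [show (∑ i, x i) = Real.sqrt ((∑ i, x i) ^ 2) by rw [Real.sqrt_sq hs]]
  apply Real.sqrt_le_sqrt
  calc ∑ i, x i ^ 2 = ∑ i, x i * x i := by simp [sq]
    _ ≤ ∑ i, x i * (∑ j, x j) := by
        apply Finset.sum_le_sum; intro i _
        exact mul_le_mul_of_nonneg_left
          (Finset.single_le_sum (fun j _ => hx j) (Finset.mem_univ i)) (hx i)
    _ = (∑ i, x i) ^ 2 := by rw [← Finset.sum_mul]; ring

lemma my_sum_le_sqrt_mul {n : ℕ} (x : Fin n → ℝ) (hx : ∀ i, 0 ≤ x i) :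
    ∑ i, x i ≤ Real.sqrt n * Real.sqrt (∑ i, x i ^ 2) := by
  have hs : 0 ≤ ∑ i, x i := Finset.sum_nonneg fun i _ => hx i
  have h := sq_sum_le_card_mul_sum_sq (s := (Finset.univ : Finset (Fin n))) (f := x)
  rw [Finset.card_univ, Fintype.card_fin] at h
  calc ∑ i, x i = Real.sqrt ((∑ i, x i) ^ 2) := (Real.sqrt_sq hs).symm
    _ ≤ Real.sqrt ((n : ℝ) * ∑ i, x i ^ 2) := Real.sqrt_le_sqrt h
    _ = Real.sqrt n * Real.sqrt (∑ i, x i ^ 2) := Real.sqrt_mul (Nat.cast_nonneg n) _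

lemma my_aux_quad {n : ℕ} (B G : Fin n → Fin n → ℝ) (Bsh : Fin n → ℝ)
    (hBsymm : ∀ i j, B i j = B j i) (hGsymm : ∀ i j, G i j = G j i)
    (hBsh : ∀ i, 0 ≤ Bsh i)
    (θv kv : Fin n → ℝ) (kmin : ℝ) (hk : ∀ i, kmin ≤ kv i)
    (M : Matrix (Fin n) (Fin n) ℝ)
    (hdiag : ∀ i, M i i = -((Bsh i + ∑ j ∈ Finset.univ.erase i, |B i j|) + kv i))
    (hoff : ∀ i j, i ≠ j →
      M i j = G i j * Real.sin (θv i - θv j) + |B i j| * Real.cos (θv i - θv j))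
    (v : Fin n → ℝ) (hv : ∀ i, 0 ≤ v i) :
    ∑ i, v i * M.mulVec v i ≤ -kmin * ∑ i, v i ^ 2 := by
  classical
  set f : Fin n → Fin n → ℝ := fun i j => if i = j then 0 else |B i j| with hfdef
  have hfsymm : ∀ i j, f i j = f j i := by
    intro i j; simp only [hfdef]
    by_cases h : i = j
    · subst h; simp
    · rw [if_neg h, if_neg (Ne.symm h), hBsymm]
  have hexp : ∑ i, v i * M.mulVec v i = ∑ i, ∑ j, M i j * (v i * v j) := by
    simp only [Matrix.mulVec, dotProduct, Finset.mul_sum]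
    refine Finset.sum_congr rfl fun i _ => Finset.sum_congr rfl fun j _ => by ring
  rw [hexp]
  have hsplit : ∀ i : Fin n, ∑ j, M i j * (v i * v j)
      = M i i * (v i * v i) + ∑ j ∈ Finset.univ.erase i, M i j * (v i * v j) := by
    intro i
    exact (Finset.add_sum_erase Finset.univ _ (Finset.mem_univ i)).symm
  simp only [hsplit, Finset.sum_add_distrib]
  have hoffsum : ∀ i : Fin n, ∑ j ∈ Finset.univ.erase i, M i j * (v i * v j)
      = (∑ j ∈ Finset.univ.erase i, G i j * Real.sin (θv i - θv j) * (v i * v j))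
      + ∑ j ∈ Finset.univ.erase i, |B i j| * Real.cos (θv i - θv j) * (v i * v j) := by
    intro i
    rw [← Finset.sum_add_distrib]
    refine Finset.sum_congr rfl fun j hj => ?_
    have hij : i ≠ j := fun h => (Finset.mem_erase.mp hj).1 h.symm
    rw [hoff i j hij]; ring
  simp only [hoffsum, Finset.sum_add_distrib]
  have hG0 : (∑ i, ∑ j ∈ Finset.univ.erase i, G i j * Real.sin (θv i - θv j) * (v i * v j)) = 0 := by
    have herase : ∀ i : Fin n, ∑ j ∈ Finset.univ.erase i, G i j * Real.sin (θv i - θv j) * (v i * v j)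
        = ∑ j, G i j * Real.sin (θv i - θv j) * (v i * v j) := by
      intro i
      exact Finset.sum_erase _ (by simp)
    simp only [herase]
    have hanti : ∀ i j : Fin n, G j i * Real.sin (θv j - θv i) * (v j * v i)
        = -(G i j * Real.sin (θv i - θv j) * (v i * v j)) := by
      intro i j
      rw [hGsymm j i, show θv j - θv i = -(θv i - θv j) by ring, Real.sin_neg]
      ring
    have hcomm := Finset.sum_comm (s := (Finset.univ : Finset (Fin n)))
      (t := Finset.univ) (f := fun i j => G i j * Real.sin (θv i - θv j) * (v i * v j))
    have : (∑ i, ∑ j, G i j * Real.sin (θv i - θv j) * (v i * v j))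
        = -∑ i, ∑ j, G i j * Real.sin (θv i - θv j) * (v i * v j) := by
      nth_rewrite 1 [hcomm]
      rw [← Finset.sum_neg_distrib]
      refine Finset.sum_congr rfl fun j _ => ?_
      rw [← Finset.sum_neg_distrib]
      exact Finset.sum_congr rfl fun i _ => hanti j i
    linarith
  have hfull : ∀ (g : Fin n → ℝ) (i : Fin n),
      ∑ j ∈ Finset.univ.erase i, |B i j| * g j = ∑ j, f i j * g j := by
    intro g i
    rw [← Finset.sum_erase (s := Finset.univ) (f := fun j => f i j * g j)
      (by simp [hfdef] : f i i * g i = 0)]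
    exact Finset.sum_congr rfl fun j hj => by
      have h : ¬ i = j := fun hh => (Finset.mem_erase.mp hj).1 hh.symm
      simp only [hfdef, if_neg h]
  have hB1 : ∀ i : Fin n, ∑ j ∈ Finset.univ.erase i, |B i j| * Real.cos (θv i - θv j) * (v i * v j)
      ≤ ∑ j ∈ Finset.univ.erase i, |B i j| * ((v i ^ 2 + v j ^ 2) / 2) := by
    intro i
    refine Finset.sum_le_sum fun j _ => ?_
    have h1 : Real.cos (θv i - θv j) * (v i * v j) ≤ v i * v j := by
      nlinarith [Real.cos_le_one (θv i - θv j), mul_nonneg (hv i) (hv j)]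
    have h2 : v i * v j ≤ (v i ^ 2 + v j ^ 2) / 2 := by nlinarith [sq_nonneg (v i - v j)]
    calc |B i j| * Real.cos (θv i - θv j) * (v i * v j)
        = |B i j| * (Real.cos (θv i - θv j) * (v i * v j)) := by ring
      _ ≤ |B i j| * ((v i ^ 2 + v j ^ 2) / 2) :=
          mul_le_mul_of_nonneg_left (h1.trans h2) (abs_nonneg _)
  have hB2 : (∑ i, ∑ j ∈ Finset.univ.erase i, |B i j| * ((v i ^ 2 + v j ^ 2) / 2))
      = ∑ i, (∑ j ∈ Finset.univ.erase i, |B i j|) * v i ^ 2 := by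
    simp only [hfull]
    have e1 : (∑ i, ∑ j, f i j * ((v i ^ 2 + v j ^ 2) / 2))
        = (∑ i, ∑ j, f i j * v i ^ 2) / 2 + (∑ i, ∑ j, f i j * v j ^ 2) / 2 := by
      rw [Finset.sum_div, Finset.sum_div, ← Finset.sum_add_distrib]
      refine Finset.sum_congr rfl fun i _ => ?_
      rw [Finset.sum_div, Finset.sum_div, ← Finset.sum_add_distrib]
      exact Finset.sum_congr rfl fun j _ => by ring
    have e2 : (∑ i, ∑ j, f i j * v j ^ 2) = ∑ i, ∑ j, f i j * v i ^ 2 := by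
      rw [Finset.sum_comm]
      refine Finset.sum_congr rfl fun i _ => Finset.sum_congr rfl fun j _ => by
        rw [hfsymm]
    rw [e1, e2]
    have e3 : ∀ i : Fin n, ∑ j, f i j * v i ^ 2 = (∑ j ∈ Finset.univ.erase i, |B i j|) * v i ^ 2 := by
      intro i
      rw [← hfull (fun _ => v i ^ 2) i, Finset.sum_mul]
    rw [show (∑ i, ∑ j, f i j * v i ^ 2) / 2 + (∑ i, ∑ j, f i j * v i ^ 2) / 2
      = ∑ i, ∑ j, f i j * v i ^ 2 from by ring]
    exact Finset.sum_congr rfl fun i _ => e3 i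
  have hBle : (∑ i, ∑ j ∈ Finset.univ.erase i, |B i j| * Real.cos (θv i - θv j) * (v i * v j))
      ≤ ∑ i, (∑ j ∈ Finset.univ.erase i, |B i j|) * v i ^ 2 := by
    rw [← hB2]; exact Finset.sum_le_sum fun i _ => hB1 i
  have hdiagle : (∑ i, M i i * (v i * v i)) + ∑ i, (∑ j ∈ Finset.univ.erase i, |B i j|) * v i ^ 2
      ≤ -kmin * ∑ i, v i ^ 2 := by
    rw [← Finset.sum_add_distrib, Finset.mul_sum]
    refine Finset.sum_le_sum fun i _ => ?_
    rw [hdiag i]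
    have := hBsh i
    have := hk i
    nlinarith [sq_nonneg (v i)]
  linarith [hG0, hBle, hdiagle]

/-- Uniform boundedness and uniform ultimate boundedness of the
time-varying network (Proposition 4). -/
theorem time_varying_network_uniformly_ultimately_bounded
    (n : ℕ) (hn : 1 ≤ n)
    (B G : Fin n → Fin n → ℝ) (Bsh τ : Fin n → ℝ)
    (hBsymm : ∀ i j, B i j = B j i)
    (hBle : ∀ i j, i ≠ j → B i j ≤ 0)
    (hGsymm : ∀ i j, G i j = G j i)
    (hGge : ∀ i j, i ≠ j → 0 ≤ G i j)
    (hBsh : ∀ i, 0 ≤ Bsh i)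
    (hτ : ∀ i, 0 < τ i)
    (θ kf Vstf : ℝ → Fin n → ℝ)
    (hθC1 : ∀ i, ContDiff ℝ 1 (fun t => θ t i))
    (hkC1 : ∀ i, ContDiff ℝ 1 (fun t => kf t i))
    (hVstC1 : ∀ i, ContDiff ℝ 1 (fun t => Vstf t i))
    (hθder : ∃ Mθ : ℝ, ∀ i t, |deriv (fun s => θ s i) t| ≤ Mθ)
    (hkder : ∃ Mk : ℝ, ∀ i t, |deriv (fun s => kf s i) t| ≤ Mk)
    (hVstder : ∃ Mv : ℝ, ∀ i t, |deriv (fun s => Vstf s i) t| ≤ Mv)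
    (ck cr kmin : ℝ) (hck : 0 < ck) (hcr : 0 < cr) (hkmin : 0 < kmin)
    (hkbound : ∀ t i, kmin ≤ kf t i ∧ kf t i ≤ ck)
    (hrbound : ∀ t i, |kf t i * Vstf t i| ≤ cr)
    (Ψ : ℝ → Matrix (Fin n) (Fin n) ℝ)
    (hΨdiag : ∀ t i,
      Ψ t i i = -((Bsh i + ∑ j ∈ Finset.univ.erase i, |B i j|) + kf t i))
    (hΨoff : ∀ t i j, i ≠ j →
      Ψ t i j = G i j * Real.sin (θ t i - θ t j)
                + |B i j| * Real.cos (θ t i - θ t j)) :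
    -- (a) uniform boundedness
    (∀ R₁ > (0 : ℝ), ∃ R₂ > (0 : ℝ), ∀ (t₀ : ℝ) (V : ℝ → Fin n → ℝ),
      IsNetSolution τ Ψ kf Vstf t₀ V → euclNorm (V t₀) ≤ R₁ →
        ∀ t ≥ t₀, euclNorm (V t) ≤ R₂) ∧
    -- (b) uniform ultimate boundedness
    (∃ R > (0 : ℝ), ∀ R₁ > (0 : ℝ), ∃ T > (0 : ℝ),
      ∀ (t₀ : ℝ) (V : ℝ → Fin n → ℝ),
        IsNetSolution τ Ψ kf Vstf t₀ V → euclNorm (V t₀) ≤ R₁ →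
          ∀ t ≥ t₀ + T, euclNorm (V t) ≤ R) := by
  classical
  haveI : Nonempty (Fin n) := ⟨⟨0, hn⟩⟩
  set τm : ℝ := Finset.univ.inf' Finset.univ_nonempty τ with hτmdef
  set τM : ℝ := Finset.univ.sup' Finset.univ_nonempty τ with hτMdef
  have hτm : 0 < τm := by
    rw [hτmdef, Finset.lt_inf'_iff]; exact fun i _ => hτ i
  have hτmle : ∀ i, τm ≤ τ i := fun i => Finset.inf'_le _ (Finset.mem_univ i)
  have hτMge : ∀ i, τ i ≤ τM := fun i => Finset.le_sup' _ (Finset.mem_univ i)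
  have hτM : 0 < τM := lt_of_lt_of_le (hτ ⟨0, hn⟩) (hτMge ⟨0, hn⟩)
  have hnτ : (0:ℝ) < (n:ℝ) * τM ^ 2 := by
    have : (0:ℝ) < (n:ℝ) := by exact_mod_cast hn
    positivity
  set a : ℝ := kmin / ((n:ℝ) * τM ^ 2) with hadef
  set b : ℝ := cr / τm with hbdef
  have ha : 0 < a := div_pos hkmin hnτ
  have hb : 0 < b := div_pos hcr hτm
  set M₀ : ℝ := b / a + 1 with hM₀def
  have hM₀pos : 0 < M₀ := by
    have : 0 < b / a := div_pos hb ha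
    rw [hM₀def]; linarith
  have e1 : a * ((n:ℝ) * τM ^ 2) = kmin := div_mul_cancel₀ kmin hnτ.ne'
  have e2 : b * τm = cr := div_mul_cancel₀ cr hτm.ne'
  have e3 : a * M₀ = b + a := by
    rw [hM₀def]; field_simp
  set δ : ℝ := a * M₀ with hδdef
  have hδ : 0 < δ := mul_pos ha hM₀pos
  -- per-solution facts
  have key : ∀ (t₀ : ℝ) (V : ℝ → Fin n → ℝ), IsNetSolution τ Ψ kf Vstf t₀ V →
      ∃ D D' : ℝ → ℝ,
        (∀ t ∈ Set.Ici t₀, HasDerivAt D (D' t) t) ∧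
        (∀ t ∈ Set.Ici t₀, D' t ≤ -(a * D t ^ 2) + b * D t) ∧
        (∀ t ∈ Set.Ici t₀, τm * euclNorm (V t) ≤ D t) ∧
        D t₀ ≤ τM * (Real.sqrt n * euclNorm (V t₀)) := by
    intro t₀ V hV
    obtain ⟨hV0, hVd⟩ := hV
    have hcontV : ∀ j, ContinuousOn (fun t => V t j) (Set.Ici t₀) :=
      fun j t ht => (hVd j t ht).continuousAt.continuousWithinAt
    have hΨcont : ∀ i j, Continuous (fun t => Ψ t i j) := by
      intro i j
      by_cases hij : i = j
      · subst hij
        have : (fun t => Ψ t i i)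
            = fun t => -((Bsh i + ∑ j ∈ Finset.univ.erase i, |B i j|) + kf t i) :=
          funext fun t => hΨdiag t i
        rw [this]
        exact (continuous_const.add (hkC1 i).continuous).neg
      · have : (fun t => Ψ t i j)
            = fun t => G i j * Real.sin (θ t i - θ t j) + |B i j| * Real.cos (θ t i - θ t j) :=
          funext fun t => hΨoff t i j hij
        rw [this]
        have hsub : Continuous fun t => θ t i - θ t j :=
          (hθC1 i).continuous.sub (hθC1 j).continuous
        exact (continuous_const.mul (Real.continuous_sin.comp hsub)).add
          (continuous_const.mul (Real.continuous_cos.comp hsub))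
    have hXcont : ∀ i, ContinuousOn
        (fun t => ((Ψ t).mulVec (V t) i + kf t i * Vstf t i) / τ i) (Set.Ici t₀) := by
      intro i
      apply ContinuousOn.div_const
      apply ContinuousOn.add
      · have : (fun t => (Ψ t).mulVec (V t) i) = fun t => ∑ j, Ψ t i j * V t j :=
          funext fun t => rfl
        rw [this]
        exact continuousOn_finset_sum _ fun j _ => ((hΨcont i j).continuousOn).mul (hcontV j)
      · exact ((hkC1 i).continuous.mul (hVstC1 i).continuous).continuousOn
    have hnonneg : ∀ t ∈ Set.Ici t₀, ∀ i, 0 ≤ V t i := by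
      intro t ht i
      refine my_aux_nonneg (g := fun s => V s i)
        (h := fun s => ((Ψ s).mulVec (V s) i + kf s i * Vstf s i) / τ i)
        ?_ (hXcont i) (hV0 i) t ht
      intro s hs
      have := hVd i s hs
      convert this using 1
      rw [mul_div_assoc]
    refine ⟨fun t => ∑ i, τ i * V t i,
      fun t => ∑ i, V t i * ((Ψ t).mulVec (V t) i + kf t i * Vstf t i), ?_, ?_, ?_, ?_⟩
    · intro t ht
      refine HasDerivAt.fun_sum fun i _ => ?_
      have h1 := (hVd i t ht).const_mul (τ i)
      refine h1.congr_deriv ?_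
      have hne := (hτ i).ne'
      field_simp
    · intro t ht
      show (∑ i, V t i * ((Ψ t).mulVec (V t) i + kf t i * Vstf t i))
        ≤ -(a * (∑ i, τ i * V t i) ^ 2) + b * ∑ i, τ i * V t i
      have hvnn := hnonneg t ht
      have hsplit : (∑ i, V t i * ((Ψ t).mulVec (V t) i + kf t i * Vstf t i))
          = (∑ i, V t i * (Ψ t).mulVec (V t) i) + ∑ i, V t i * (kf t i * Vstf t i) := by
        rw [← Finset.sum_add_distrib]
        exact Finset.sum_congr rfl fun i _ => by ring
      have h1 := my_aux_quad B G Bsh hBsymm hGsymm hBsh (θ t) (kf t) kmin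
        (fun i => (hkbound t i).1) (Ψ t) (fun i => hΨdiag t i)
        (fun i j hij => hΨoff t i j hij) (V t) hvnn
      have h2 : (∑ i, V t i * (kf t i * Vstf t i)) ≤ cr * ∑ i, V t i := by
        rw [Finset.mul_sum]
        refine Finset.sum_le_sum fun i _ => ?_
        calc V t i * (kf t i * Vstf t i) ≤ V t i * |kf t i * Vstf t i| :=
              mul_le_mul_of_nonneg_left (le_abs_self _) (hvnn i)
          _ ≤ V t i * cr := mul_le_mul_of_nonneg_left (hrbound t i) (hvnn i)
          _ = cr * V t i := mul_comm _ _
      -- now relate sums to D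
      set S1 := ∑ i, V t i with hS1def
      set S2 := ∑ i, V t i ^ 2 with hS2def
      set Dt := ∑ i, τ i * V t i with hDtdef
      have hS1nn : 0 ≤ S1 := Finset.sum_nonneg fun i _ => hvnn i
      have hle1 : Dt ≤ τM * S1 := by
        rw [hDtdef, hS1def, Finset.mul_sum]
        exact Finset.sum_le_sum fun i _ => mul_le_mul_of_nonneg_right (hτMge i) (hvnn i)
      have hle2 : τm * S1 ≤ Dt := by
        rw [hDtdef, hS1def, Finset.mul_sum]
        exact Finset.sum_le_sum fun i _ => mul_le_mul_of_nonneg_right (hτmle i) (hvnn i)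
      have hDnn : 0 ≤ Dt := le_trans (mul_nonneg hτm.le hS1nn) hle2
      have hsq : S1 ^ 2 ≤ (n:ℝ) * S2 := by
        have h := sq_sum_le_card_mul_sum_sq (s := (Finset.univ : Finset (Fin n))) (f := V t)
        rw [Finset.card_univ, Fintype.card_fin] at h
        exact h
      have k1 : a * Dt ^ 2 ≤ kmin * S2 := by
        calc a * Dt ^ 2 ≤ a * ((τM * S1) ^ 2) :=
              mul_le_mul_of_nonneg_left (pow_le_pow_left₀ hDnn hle1 2) ha.le
          _ = a * (τM ^ 2 * S1 ^ 2) := by ring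
          _ ≤ a * (τM ^ 2 * ((n:ℝ) * S2)) :=
              mul_le_mul_of_nonneg_left
                (mul_le_mul_of_nonneg_left hsq (sq_nonneg τM)) ha.le
          _ = (a * ((n:ℝ) * τM ^ 2)) * S2 := by ring
          _ = kmin * S2 := by rw [e1]
      have k2 : cr * S1 ≤ b * Dt := by
        calc cr * S1 = b * (τm * S1) := by rw [← e2]; ring
          _ ≤ b * Dt := mul_le_mul_of_nonneg_left hle2 hb.le
      rw [hsplit]
      linarith
    · intro t ht
      have hvnn := hnonneg t ht
      have h1 : euclNorm (V t) ≤ ∑ i, V t i := my_euclNorm_le_sum (V t) hvnn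
      have h2 : τm * (∑ i, V t i) ≤ ∑ i, τ i * V t i := by
        rw [Finset.mul_sum]
        exact Finset.sum_le_sum fun i _ => mul_le_mul_of_nonneg_right (hτmle i) (hvnn i)
      calc τm * euclNorm (V t) ≤ τm * ∑ i, V t i :=
            mul_le_mul_of_nonneg_left h1 hτm.le
        _ ≤ ∑ i, τ i * V t i := h2
    · have hvnn : ∀ i, 0 ≤ V t₀ i := hV0
      have h1 : (∑ i, τ i * V t₀ i) ≤ τM * ∑ i, V t₀ i := by
        rw [Finset.mul_sum]
        exact Finset.sum_le_sum fun i _ => mul_le_mul_of_nonneg_right (hτMge i) (hvnn i)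
      have h2 : (∑ i, V t₀ i) ≤ Real.sqrt n * euclNorm (V t₀) :=
        my_sum_le_sqrt_mul (V t₀) hvnn
      calc (∑ i, τ i * V t₀ i) ≤ τM * ∑ i, V t₀ i := h1
        _ ≤ τM * (Real.sqrt n * euclNorm (V t₀)) :=
            mul_le_mul_of_nonneg_left h2 hτM.le
  constructor
  · -- (a)
    intro R₁ hR₁
    set Mbar : ℝ := max (τM * (Real.sqrt n * R₁)) M₀ with hMbardef
    have hMbarM₀ : M₀ ≤ Mbar := le_max_right _ _
    have hMbar0 : 0 < Mbar := lt_of_lt_of_le hM₀pos hMbarM₀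
    refine ⟨Mbar / τm, div_pos hMbar0 hτm, ?_⟩
    intro t₀ V hV hnorm t ht
    obtain ⟨D, D', hD, hD', hlow, hinit⟩ := key t₀ V hV
    have hDt₀ : D t₀ ≤ Mbar := by
      refine le_trans hinit (le_trans ?_ (le_max_left _ _))
      exact mul_le_mul_of_nonneg_left
        (mul_le_mul_of_nonneg_left hnorm (Real.sqrt_nonneg _)) hτM.le
    have hbarrier : ∀ s ∈ Set.Ici t₀, D s = Mbar → D' s < 0 := by
      intro s hs heq
      have h1 := hD' s hs
      rw [heq] at h1
      have h5 : b + a ≤ a * Mbar := by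
        have := mul_le_mul_of_nonneg_left hMbarM₀ ha.le
        linarith [e3, hδdef]
      have h6 : 0 < Mbar * (a * Mbar - b) := mul_pos hMbar0 (by linarith)
      nlinarith
    have hbound := my_aux_le_const hD hDt₀ hbarrier t ht
    have h7 := hlow t ht
    rw [ge_iff_le, ← Set.mem_Ici] at ht
    rw [le_div_iff₀ hτm]
    calc euclNorm (V t) * τm = τm * euclNorm (V t) := mul_comm _ _
      _ ≤ D t := h7
      _ ≤ Mbar := hbound
  · -- (b)
    refine ⟨M₀ / τm, div_pos hM₀pos hτm, ?_⟩
    intro R₁ hR₁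
    set C : ℝ := max (τM * (Real.sqrt n * R₁)) M₀ + 1 with hCdef
    have hCM : M₀ < C := by
      have := le_max_right (τM * (Real.sqrt n * R₁)) M₀
      rw [hCdef]; linarith
    have hδ2 : (0:ℝ) < δ / 2 := by linarith
    refine ⟨(C - M₀) / (δ / 2), div_pos (by linarith) hδ2, ?_⟩
    intro t₀ V hV hnorm t ht
    obtain ⟨D, D', hD, hD', hlow, hinit⟩ := key t₀ V hV
    have hDt₀ : D t₀ ≤ C := by
      refine le_trans hinit ?_
      have h8 : τM * (Real.sqrt n * euclNorm (V t₀)) ≤ τM * (Real.sqrt n * R₁) :=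
        mul_le_mul_of_nonneg_left
          (mul_le_mul_of_nonneg_left hnorm (Real.sqrt_nonneg _)) hτM.le
      have := le_max_left (τM * (Real.sqrt n * R₁)) M₀
      rw [hCdef]; linarith
    have hdec : ∀ s ∈ Set.Ici t₀, M₀ ≤ D s → D' s ≤ -δ := by
      intro s hs hMs
      have h1 := hD' s hs
      have h3 : a ≤ a * D s - b := by
        have := mul_le_mul_of_nonneg_left hMs ha.le
        linarith [e3, hδdef]
      have h2 : δ ≤ D s * (a * D s - b) := by
        calc δ = M₀ * a := by rw [hδdef]; ring
          _ ≤ D s * (a * D s - b) :=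
              mul_le_mul hMs h3 ha.le (le_trans hM₀pos.le hMs)
      nlinarith
    have hmid : D (t₀ + (C - M₀) / (δ / 2)) ≤ M₀ :=
      my_aux_decay hD hδ hCM.le hDt₀ hdec
    set T : ℝ := (C - M₀) / (δ / 2) with hTdef
    have hT : 0 < T := div_pos (by linarith) hδ2
    have hsub : Set.Ici (t₀ + T) ⊆ Set.Ici t₀ := by
      intro s hs
      rw [Set.mem_Ici] at hs ⊢
      linarith
    have hafter : ∀ s ∈ Set.Ici (t₀ + T), D s ≤ M₀ := by
      refine my_aux_le_const (fun s hs => hD s (hsub hs)) hmid ?_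
      intro s hs heq
      have := hdec s (hsub hs) heq.ge
      linarith
    have h7 := hlow t (hsub ht)
    have h9 := hafter t ht
    rw [le_div_iff₀ hτm]
    calc euclNorm (V t) * τm = τm * euclNorm (V t) := mul_comm _ _
      _ ≤ D t := h7
      _ ≤ M₀ := h9
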